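/- Fix an integer r ≥ 2 and work in the representation of the Heisenberg operators J^a_k on the module M described in the context, with the operators W^{i}_k (i ∈ [r], k ∈ ℤ) defined by the quantum Miura recursion. Then for all 1 ≤ i ≤ r and all k ∈ ℤ one has the identity of K-linear operators on M: W^{i}_k = Σ_{γ ∈ Γ_{(0,k)→(i,0)}} Σ_{f} wt(γ,f), where f ranges over all strictly increasing functions [i] → [r], and the sum over paths is locally finite (for each element of M only finitely many summands act nonzero). (This is the combinatorial formula for the generators of the W-algebra W^k(gl_r), Lemma 3.4 of the paper.) -/

import Mathlib

open MvPolynomial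

noncomputable section Stmt4

/-- The parameters `ℏ, 𝔟, Λ` (first component) and `P_1,…,P_r`, `Q_0,…,Q_{r−2}`. -/
abbrev Vars (r : ℕ) : Type := Fin 3 ⊕ (Fin r ⊕ Fin (r - 1))

/-- The field `K = ℚ(ℏ, 𝔟, Λ, P_1,…,P_r, Q_0,…,Q_{r−2})`. -/
abbrev KK (r : ℕ) : Type := FractionRing (MvPolynomial (Vars r) ℚ)

/-- The module `M = K[x^a_k : a ∈ [r], k ≥ 1]` (the variable `(a, k)` stands for `x^a_k`;
indices outside `[r] × ℤ_{≥1}` are unused). -/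
abbrev MM (r : ℕ) : Type := MvPolynomial (ℕ × ℕ) (KK r)

/-- Embedding of parameter indeterminates into `K`. -/
def par (r : ℕ) (v : Vars r) : KK r := algebraMap (MvPolynomial (Vars r) ℚ) (KK r) (X v)

/-- `ℏ`. -/
def hb (r : ℕ) : KK r := par r (Sum.inl 0)

/-- `𝔟`. -/
def bb (r : ℕ) : KK r := par r (Sum.inl 1)

/-- `Λ`. -/
def Lam (r : ℕ) : KK r := par r (Sum.inl 2)

/-- `P_1, …, P_r` (zero-indexed). -/
def Pv (r : ℕ) (i : Fin r) : KK r := par r (Sum.inr (Sum.inl i))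

/-- `Q_0, …, Q_{r−2}` (indexed by `Fin (r−1)`; `Q_j = Qv ⟨j⟩`). -/
def Qv (r : ℕ) (j : Fin (r - 1)) : KK r := par r (Sum.inr (Sum.inr j))

/-- The scalar by which the zero mode `J^a_0` acts (for the 1-based index `a ∈ [r]`):
`Q_{a−1} − ℏ𝔟(a−1)` for `a ∈ [r−1]`, and
`−Σ_{a'=1}^{r} P_{a'} − Σ_{a'=0}^{r−2} Q_{a'} − ℏ𝔟(r−1)` for `a = r`. -/
def Jzero (r : ℕ) (a : ℕ) : KK r :=
  if h : 1 ≤ a ∧ a < r then Qv r ⟨a - 1, by omega⟩ - hb r * bb r * ((a - 1 : ℕ) : KK r)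
  else if a = r then
    -(∑ i : Fin r, Pv r i) - (∑ j : Fin (r - 1), Qv r j) - hb r * bb r * ((r - 1 : ℕ) : KK r)
  else 0

/-- The Heisenberg operators `J^a_k` on `M` (for the 1-based index `a ∈ [r]`):
`J^a_k = ℏ ∂_{x^a_k}` for `k > 0`;
`J^a_k = ℏ(−k)·x^a_{−k} + (−1)^r Λ^{−1} δ_{k,−1} δ_{a,r}` for `k < 0`;
and `J^a_0` is the scalar `Jzero r a`. -/
def Jop (r : ℕ) (a : ℕ) (k : ℤ) : MM r → MM r :=
  if 0 < k then fun p => C (hb r) * pderiv (a, k.toNat) p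
  else if k < 0 then fun p =>
    C (hb r * ((-k : ℤ) : KK r)) * X (a, (-k).toNat) * p +
      (if k = -1 ∧ a = r then C ((-1 : KK r) ^ r * (Lam r)⁻¹) * p else 0)
  else fun p => C (Jzero r a) * p

/-- The Miura operators `W^{i,s}_k` (recursion on `s`, the first explicit argument):
`W^{0,s}_k = δ_{k,0}·Id`, `W^{i,s}_k = 0` for `i > s`, and
`W^{i,s}_k = W^{i,s−1}_k + Σ_{k_1+k_2=k} (J^{r−s+1}_{k_1} − δ_{k_1,0} ℏ𝔟(k_2+i−1)) W^{i−1,s−1}_{k_2}`,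
the (locally finite) sum over `k_2 ∈ ℤ` being interpreted as a `finsum`. -/
def Wop (r : ℕ) : ℕ → ℕ → ℤ → MM r → MM r
  | 0, i, k => if i = 0 then (fun p => if k = 0 then p else 0) else 0
  | s + 1, i, k =>
      if i = 0 then (fun p => if k = 0 then p else 0)
      else if s + 1 < i then 0
      else fun p =>
        Wop r s i k p +
          ∑ᶠ k₂ : ℤ,
            (if k - k₂ = 0 then
                (fun q => Jop r (r - s) 0 q -
                  C (hb r * bb r * ((k₂ + (i : ℤ) - 1 : ℤ) : KK r)) * q)
              else Jop r (r - s) (k - k₂))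
              (Wop r s (i - 1) k₂ p)

/-- The set of paths from `(x, y)` to `(x + N, y')`, encoded as the list of the `N`
successive height increments. -/
def PathSet (y : ℤ) (N : ℕ) (y' : ℤ) : Set (List ℤ) :=
  {L | L.length = N ∧ y + L.sum = y'}

/-- The colored weight `wt(γ, f)` of a path of total length `N` ending at height `hN`,
processed from the left; the path is given as the list of pairs
(color of the step, height increment of the step). At (1-based) position `u` and current
height `y`, a non-flat step of increment `d` and color `c` contributes the operator
`J^c_{-d}` (i.e. `J^c_{h_{j-1}-h_j}`), while a flat step contributes
`J^c_0 − ℏ𝔟(h_j − h_N + N − j)`. The first step's operator is applied last. -/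
def wtCol (r : ℕ) (N : ℕ) (hN : ℤ) : ℕ → ℤ → List (ℕ × ℤ) → MM r → MM r
  | _, _, [] => id
  | u, y, (c, d) :: rest =>
      (if d = 0 then
          (fun p => Jop r c 0 p -
            C (hb r * bb r * ((y - hN + (N : ℤ) - (u : ℤ) : ℤ) : KK r)) * p)
        else Jop r c (-d)) ∘
        wtCol r N hN (u + 1) (y + d) rest

/-- The set of strictly increasing lists of length `j` with entries in `[lo..hi]`
(encoding strictly increasing functions `[j] → [lo..hi]`). -/
def IncLists (j lo hi : ℕ) : Set (List ℕ) :=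
  {ns | ns.length = j ∧ ns.Chain' (· < ·) ∧ ∀ c ∈ ns, lo ≤ c ∧ c ≤ hi}

namespace Stmt4Aux
open Function
variable {r : ℕ}
lemma sep_eq_inter_support {α : Type*} (s : Set α) (f : α → MM r) :
    {x ∈ s | f x ≠ 0} = s ∩ Function.support f := rfl

/-! ### Monomial weight -/

def wt0 (d : (ℕ × ℕ) →₀ ℕ) : ℕ := d.sum fun v e => v.2 * e

lemma wt0_add (d₁ d₂ : (ℕ × ℕ) →₀ ℕ) : wt0 (d₁ + d₂) = wt0 d₁ + wt0 d₂ :=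
  Finsupp.sum_add_index' (fun v => mul_zero _) (fun v e₁ e₂ => mul_add _ _ _)

lemma wt0_single (v : ℕ × ℕ) (e : ℕ) : wt0 (Finsupp.single v e) = v.2 * e :=
  Finsupp.sum_single_index (mul_zero _)

def Wle (p : MM r) (n : ℤ) : Prop := ∀ d ∈ p.support, (wt0 d : ℤ) ≤ n

lemma Wle_zero (n : ℤ) : Wle (0 : MM r) n := by
  intro d hd; simp [MvPolynomial.support_zero] at hd

lemma Wle.mono {p : MM r} {n n' : ℤ} (h : Wle p n) (hn : n ≤ n') : Wle p n' :=
  fun d hd => (h d hd).trans hn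

lemma eq_zero_of_Wle_neg {p : MM r} {n : ℤ} (h : Wle p n) (hn : n < 0) : p = 0 := by
  by_contra hp
  obtain ⟨d, hd⟩ := (MvPolynomial.support_nonempty.mpr hp)
  have := h d hd
  have : (0 : ℤ) ≤ wt0 d := Int.ofNat_nonneg _
  omega

lemma Wle_add {p q : MM r} {n : ℤ} (hp : Wle p n) (hq : Wle q n) : Wle (p + q) n := by
  intro d hd
  rcases Finset.mem_union.mp (MvPolynomial.support_add hd) with h | h
  · exact hp d h
  · exact hq d h

lemma Wle_neg {p : MM r} {n : ℤ} (hp : Wle p n) : Wle (-p) n := by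
  intro d hd; rw [MvPolynomial.support_neg] at hd; exact hp d hd

lemma Wle_sub {p q : MM r} {n : ℤ} (hp : Wle p n) (hq : Wle q n) : Wle (p - q) n := by
  rw [sub_eq_add_neg]; exact Wle_add hp (Wle_neg hq)

lemma Wle_Cmul {p : MM r} {n : ℤ} (c : KK r) (hp : Wle p n) : Wle (C c * p) n := by
  intro d hd
  rw [← MvPolynomial.smul_eq_C_mul] at hd
  exact hp d (MvPolynomial.support_smul hd)

lemma Wle_Xmul {p : MM r} {n : ℤ} (v : ℕ × ℕ) (hp : Wle p n) :
    Wle (X v * p) (n + v.2) := by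
  intro d hd
  have := MvPolynomial.support_mul (X v : MM r) p hd
  rw [MvPolynomial.support_X] at this
  rcases Finset.mem_add.mp this with ⟨d₁, h₁, d₂, h₂, rfl⟩
  rcases Finset.mem_singleton.mp h₁
  have := hp d₂ h₂
  rw [wt0_add, wt0_single]
  push_cast
  omega

lemma sub_single_add {d : (ℕ × ℕ) →₀ ℕ} {v : ℕ × ℕ} (h : 1 ≤ d v) :
    (d - Finsupp.single v 1) + Finsupp.single v 1 = d := by
  ext w
  rcases eq_or_ne w v with rfl | hw
  · simp only [Finsupp.add_apply, Finsupp.tsub_apply, Finsupp.single_eq_same]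
    omega
  · simp [Finsupp.single_apply, Ne.symm hw]

lemma Wle_pderiv {p : MM r} {n : ℤ} (v : ℕ × ℕ) (hp : Wle p n) :
    Wle (pderiv v p) (n - v.2) := by
  intro d hd
  classical
  rw [MvPolynomial.as_sum p, map_sum] at hd
  obtain ⟨d', hd', hmem⟩ := Finset.mem_biUnion.mp (MvPolynomial.support_sum hd)
  rw [pderiv_monomial] at hmem
  have hd'' := MvPolynomial.support_monomial_subset hmem
  have hne : coeff d' p * d' v ≠ 0 := by
    intro h0
    rw [h0] at hmem
    simp [MvPolynomial.monomial_zero] at hmem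
  have hv : 1 ≤ d' v := by
    rcases Nat.eq_zero_or_pos (d' v) with h | h
    · exact absurd (by simp [h]) hne
    · exact h
  rcases Finset.mem_singleton.mp hd''
  have hw : wt0 (d' - Finsupp.single v 1) + v.2 * 1 = wt0 d' := by
    rw [← wt0_single v 1, ← wt0_add, sub_single_add hv]
  have := hp d' hd'
  omega

/-! ### Variables bound -/

def Vle (p : MM r) (S : Set (ℕ × ℕ)) : Prop := ∀ v ∈ p.vars, v ∈ S

lemma Vle_zero (S : Set (ℕ × ℕ)) : Vle (0 : MM r) S := by
  intro v hv; simp [MvPolynomial.vars_0] at hv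

lemma Vle.mono {p : MM r} {S T : Set (ℕ × ℕ)} (h : Vle p S) (hST : S ⊆ T) : Vle p T :=
  fun v hv => hST (h v hv)

lemma Vle_add {p q : MM r} {S : Set (ℕ × ℕ)} (hp : Vle p S) (hq : Vle q S) :
    Vle (p + q) S := by
  classical
  intro v hv
  rcases Finset.mem_union.mp (MvPolynomial.vars_add_subset p q hv) with h | h
  · exact hp v h
  · exact hq v h

lemma Vle_neg {p : MM r} {S : Set (ℕ × ℕ)} (hp : Vle p S) : Vle (-p) S := by
  intro v hv; rw [MvPolynomial.vars_neg] at hv; exact hp v hv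

lemma Vle_sub {p q : MM r} {S : Set (ℕ × ℕ)} (hp : Vle p S) (hq : Vle q S) :
    Vle (p - q) S := by
  rw [sub_eq_add_neg]; exact Vle_add hp (Vle_neg hq)

lemma Vle_Cmul {p : MM r} {S : Set (ℕ × ℕ)} (c : KK r) (hp : Vle p S) :
    Vle (C c * p) S := by
  by_cases hc : c = 0
  · rw [hc]; simpa using Vle_zero S
  · intro v hv
    rw [MvPolynomial.vars_C_mul _ hc] at hv
    exact hp v hv

lemma Vle_Xmul {p : MM r} {S : Set (ℕ × ℕ)} (v : ℕ × ℕ) (hp : Vle p S) :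
    Vle (X v * p) (S ∪ {v}) := by
  classical
  intro w hw
  rcases Finset.mem_union.mp (MvPolynomial.vars_mul _ _ hw) with h | h
  · rw [MvPolynomial.vars_X] at h
    exact Or.inr (Finset.mem_singleton.mp h)
  · exact Or.inl (hp w h)

lemma Vle_pderiv {p : MM r} {S : Set (ℕ × ℕ)} (v : ℕ × ℕ) (hp : Vle p S) :
    Vle (pderiv v p) S := by
  classical
  intro w hw
  rw [MvPolynomial.as_sum p, map_sum] at hw
  obtain ⟨d', hd', hmem⟩ := Finset.mem_biUnion.mp (MvPolynomial.vars_sum_subset _ _ hw)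
  rw [pderiv_monomial] at hmem
  by_cases hc : coeff d' p * d' v = 0
  · rw [hc] at hmem
    simp [MvPolynomial.vars_monomial] at hmem
  · rw [MvPolynomial.vars_monomial hc] at hmem
    have : w ∈ d'.support := Finsupp.support_tsub hmem
    have : w ∈ p.vars := (MvPolynomial.mem_vars w).mpr ⟨d', hd', this⟩
    exact hp w this

lemma Wle_finsetsum {α : Type*} {s : Finset α} {f : α → MM r} {n : ℤ}
    (h : ∀ x ∈ s, Wle (f x) n) : Wle (∑ x ∈ s, f x) n := by
  classical
  intro d hd
  obtain ⟨x, hx, hmem⟩ := Finset.mem_biUnion.mp (MvPolynomial.support_sum hd)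
  exact h x hx d hmem

lemma Vle_finsetsum {α : Type*} {s : Finset α} {f : α → MM r} {S : Set (ℕ × ℕ)}
    (h : ∀ x ∈ s, Vle (f x) S) : Vle (∑ x ∈ s, f x) S := by
  classical
  intro v hv
  obtain ⟨x, hx, hmem⟩ := Finset.mem_biUnion.mp (MvPolynomial.vars_sum_subset _ _ hv)
  exact h x hx v hmem

lemma Wle_finsum {α : Type*} {f : α → MM r} {n : ℤ} (h : ∀ x, Wle (f x) n) :
    Wle (∑ᶠ x, f x) n := by
  by_cases hf : (Function.support f).Finite
  · rw [finsum_eq_sum f hf]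
    exact Wle_finsetsum fun x _ => h _
  · rw [finsum_of_infinite_support hf]
    exact Wle_zero n

lemma Vle_finsum {α : Type*} {f : α → MM r} {S : Set (ℕ × ℕ)} (h : ∀ x, Vle (f x) S) :
    Vle (∑ᶠ x, f x) S := by
  by_cases hf : (Function.support f).Finite
  · rw [finsum_eq_sum f hf]
    exact Vle_finsetsum fun x _ => h _
  · rw [finsum_of_infinite_support hf]
    exact Vle_zero S

lemma Wle_finsum_mem {α : Type*} {s : Set α} {f : α → MM r} {n : ℤ}
    (h : ∀ x ∈ s, Wle (f x) n) : Wle (∑ᶠ x ∈ s, f x) n := by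
  rw [finsum_mem_def]
  apply Wle_finsum
  intro x
  by_cases hx : x ∈ s
  · rw [Set.indicator_of_mem hx]; exact h x hx
  · rw [Set.indicator_of_notMem hx]; exact Wle_zero n

lemma Vle_finsum_mem {α : Type*} {s : Set α} {f : α → MM r} {S : Set (ℕ × ℕ)}
    (h : ∀ x ∈ s, Vle (f x) S) : Vle (∑ᶠ x ∈ s, f x) S := by
  rw [finsum_mem_def]
  apply Vle_finsum
  intro x
  by_cases hx : x ∈ s
  · rw [Set.indicator_of_mem hx]; exact h x hx
  · rw [Set.indicator_of_notMem hx]; exact Vle_zero S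


/-! ### The step operator -/

def stepOp (r : ℕ) (a : ℕ) (m : ℤ) (t : KK r) (q : MM r) : MM r :=
  if m = 0 then Jop r a 0 q - C (hb r * bb r * t) * q else Jop r a m q

lemma Jop_zero (a : ℕ) (k : ℤ) : Jop r a k 0 = 0 := by
  unfold Jop
  split_ifs <;> simp

lemma Jop_add (a : ℕ) (k : ℤ) (p q : MM r) :
    Jop r a k (p + q) = Jop r a k p + Jop r a k q := by
  unfold Jop
  split_ifs <;> simp [mul_add] <;> ring

lemma Jop_wle {p : MM r} {n : ℤ} (a : ℕ) (k : ℤ) (hp : Wle p n) :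
    Wle (Jop r a k p) (n - k) := by
  have hX : k < 0 → Wle (C (hb r * ((-k : ℤ) : KK r)) * X (a, (-k).toNat) * p) (n - k) := by
    intro h2
    rw [mul_assoc]
    exact (Wle_Cmul _ (Wle_Xmul _ hp)).mono
      (le_of_eq (by simp [Int.toNat_of_nonneg (by omega : (0:ℤ) ≤ -k)]; ring))
  unfold Jop
  split_ifs with h1 h2 h3
  · exact (Wle_Cmul _ (Wle_pderiv _ hp)).mono (by simp [Int.toNat_of_nonneg h1.le])
  · exact Wle_add (hX h2) ((Wle_Cmul _ hp).mono (by omega))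
  · simpa using hX h2
  · have hk : k = 0 := by omega
    subst hk
    exact (Wle_Cmul _ hp).mono (by omega)

lemma Jop_vars {p : MM r} {S : Set (ℕ × ℕ)} (a : ℕ) (k : ℤ) (hp : Vle p S) :
    Vle (Jop r a k p) (S ∪ {w | w.1 = a}) := by
  have hX : Vle (C (hb r * ((-k : ℤ) : KK r)) * X (a, (-k).toNat) * p) (S ∪ {w | w.1 = a}) := by
    rw [mul_assoc]
    refine (Vle_Cmul _ (Vle_Xmul _ hp)).mono ?_
    rintro v (hv | hv)
    · exact Or.inl hv
    · rcases hv with rfl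
      exact Or.inr rfl
  unfold Jop
  split_ifs with h1 h2 h3
  · exact (Vle_Cmul _ (Vle_pderiv _ hp)).mono Set.subset_union_left
  · exact Vle_add hX ((Vle_Cmul _ hp).mono Set.subset_union_left)
  · simpa using hX
  · exact (Vle_Cmul _ hp).mono Set.subset_union_left

lemma Jop_kill {q : MM r} (a : ℕ) {k : ℤ} (hk : 0 < k)
    (hv : (a, k.toNat) ∉ q.vars) : Jop r a k q = 0 := by
  unfold Jop
  rw [if_pos hk, pderiv_eq_zero_of_notMem_vars hv, mul_zero]

lemma stepOp_zero (a : ℕ) (m : ℤ) (t : KK r) : stepOp r a m t 0 = 0 := by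
  unfold stepOp
  split_ifs <;> simp [Jop_zero]

lemma stepOp_add (a : ℕ) (m : ℤ) (t : KK r) (p q : MM r) :
    stepOp r a m t (p + q) = stepOp r a m t p + stepOp r a m t q := by
  unfold stepOp
  split_ifs <;> simp [Jop_add] <;> ring

/-- The step operator as an additive monoid hom. -/
def stepHom (r : ℕ) (a : ℕ) (m : ℤ) (t : KK r) : MM r →+ MM r :=
  AddMonoidHom.mk' (stepOp r a m t) (stepOp_add a m t)

lemma stepOp_wle {q : MM r} {n : ℤ} (a : ℕ) (m : ℤ) (t : KK r) (hq : Wle q n) :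
    Wle (stepOp r a m t q) (n - m) := by
  unfold stepOp
  split_ifs with h
  · subst h
    exact (Wle_sub ((Jop_wle a 0 hq).mono (by omega)) (Wle_Cmul _ hq)).mono (by omega)
  · exact Jop_wle a m hq

lemma stepOp_vars {q : MM r} {S : Set (ℕ × ℕ)} (a : ℕ) (m : ℤ) (t : KK r) (hq : Vle q S) :
    Vle (stepOp r a m t q) (S ∪ {w | w.1 = a}) := by
  unfold stepOp
  split_ifs with h
  · exact Vle_sub (Jop_vars a 0 hq) ((Vle_Cmul _ hq).mono Set.subset_union_left)
  · exact Jop_vars a m hq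

lemma stepOp_kill {q : MM r} (a : ℕ) {m : ℤ} (t : KK r) (hm : 0 < m)
    (hv : (a, m.toNat) ∉ q.vars) : stepOp r a m t q = 0 := by
  unfold stepOp
  rw [if_neg (by omega), Jop_kill a hm hv]

lemma stepOp_t_congr {q : MM r} (a : ℕ) (m : ℤ) {t t' : KK r} (h : m = 0 → t = t') :
    stepOp r a m t q = stepOp r a m t' q := by
  unfold stepOp
  split_ifs with hm
  · rw [h hm]
  · rfl

/-! ### Weight and variable bounds -/

def wtP (p : MM r) : ℕ := p.support.sup wt0

lemma Wle_wtP (p : MM r) : Wle p (wtP p) := fun d hd => by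
  exact_mod_cast Finset.le_sup (f := wt0) hd

def Bp (p : MM r) : ℕ := p.vars.sup Prod.snd

lemma snd_le_Bp {p : MM r} {v : ℕ × ℕ} (hv : v ∈ p.vars) : v.2 ≤ Bp p :=
  Finset.le_sup (f := Prod.snd) hv

/-! ### wtCol lemmas -/

lemma wtCol_nil (N : ℕ) (hN : ℤ) (u : ℕ) (y : ℤ) (p : MM r) :
    wtCol r N hN u y [] p = p := rfl

lemma wtCol_cons (N : ℕ) (hN : ℤ) (u : ℕ) (y : ℤ) (c : ℕ) (d : ℤ) (rest : List (ℕ × ℤ))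
    (p : MM r) :
    wtCol r N hN u y ((c, d) :: rest) p
      = stepOp r c (-d) (((y - hN + (N : ℤ) - (u : ℤ) : ℤ) : KK r))
          (wtCol r N hN (u + 1) (y + d) rest p) := by
  show (if d = 0 then _ else Jop r c (-d)) (wtCol r N hN (u + 1) (y + d) rest p) = _
  unfold stepOp
  by_cases h : d = 0
  · rw [if_pos h, if_pos (by omega : -d = 0)]
  · rw [if_neg h, if_neg (by omega : ¬-d = 0)]

lemma wtCol_shift (N : ℕ) (hN : ℤ) : ∀ (l : List (ℕ × ℤ)) (u : ℕ) (y : ℤ) (p : MM r),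
    wtCol r N hN u y l p = wtCol r (N + 1) hN (u + 1) y l p := by
  intro l
  induction l with
  | nil => intro u y p; rfl
  | cons hd tl ih =>
    intro u y p
    obtain ⟨c, d⟩ := hd
    rw [wtCol_cons, wtCol_cons, ih]
    congr 2
    push_cast
    ring

lemma wtCol_zero (N : ℕ) (hN : ℤ) (l : List (ℕ × ℤ)) (u : ℕ) (y : ℤ) :
    wtCol r N hN u y l 0 = 0 := by
  induction l generalizing u y with
  | nil => rfl
  | cons hd tl ih =>
    obtain ⟨c, d⟩ := hd
    rw [wtCol_cons, ih, stepOp_zero]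

lemma wtCol_add (N : ℕ) (hN : ℤ) (l : List (ℕ × ℤ)) (u : ℕ) (y : ℤ) (p q : MM r) :
    wtCol r N hN u y l (p + q) = wtCol r N hN u y l p + wtCol r N hN u y l q := by
  induction l generalizing u y with
  | nil => rfl
  | cons hd tl ih =>
    obtain ⟨c, d⟩ := hd
    rw [wtCol_cons, wtCol_cons, wtCol_cons, ih, stepOp_add]

lemma wtCol_wle {p : MM r} {n : ℤ} (N : ℕ) (hN : ℤ) (l : List (ℕ × ℤ)) (u : ℕ) (y : ℤ)
    (hp : Wle p n) :
    Wle (wtCol r N hN u y l p) (n + (l.map Prod.snd).sum) := by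
  induction l generalizing u y with
  | nil => simpa [wtCol_nil] using hp
  | cons hd tl ih =>
    obtain ⟨c, d⟩ := hd
    rw [wtCol_cons]
    refine (stepOp_wle _ _ _ (ih (u + 1) (y + d))).mono (le_of_eq ?_)
    simp [List.sum_cons]
    ring

lemma wtCol_vars {p : MM r} {S : Set (ℕ × ℕ)} {lo : ℕ} (N : ℕ) (hN : ℤ)
    (l : List (ℕ × ℤ)) (u : ℕ) (y : ℤ) (hl : ∀ x ∈ l, lo ≤ x.1) (hp : Vle p S) :
    Vle (wtCol r N hN u y l p) (S ∪ {w | lo ≤ w.1}) := by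
  induction l generalizing u y with
  | nil => exact hp.mono Set.subset_union_left
  | cons hd tl ih =>
    obtain ⟨c, d⟩ := hd
    rw [wtCol_cons]
    have hc : lo ≤ c := hl (c, d) (List.mem_cons_self)
    refine (stepOp_vars _ _ _ (ih (u + 1) (y + d)
      (fun x hx => hl x (List.mem_cons_of_mem _ hx)))).mono ?_
    rintro w ((hw | hw) | hw)
    · exact Or.inl hw
    · exact Or.inr hw
    · exact Or.inr (by simp only [Set.mem_setOf_eq] at hw ⊢; omega)

/-! ### Wop lemmas -/

lemma Wop_succ (s i : ℕ) (k : ℤ) (p : MM r) (hi0 : i ≠ 0) (hle : i ≤ s + 1) :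
    Wop r (s + 1) i k p = Wop r s i k p +
      ∑ᶠ k₂ : ℤ, stepOp r (r - s) (k - k₂) (((k₂ + (i : ℤ) - 1 : ℤ) : KK r))
        (Wop r s (i - 1) k₂ p) := by
  show (if i = 0 then _ else if s + 1 < i then _ else _ : MM r → MM r) p = _
  rw [if_neg hi0, if_neg (by omega)]
  congr 1
  apply finsum_congr
  intro k₂
  unfold stepOp
  by_cases h : k - k₂ = 0
  · rw [if_pos h, if_pos h]
  · rw [if_neg h, if_neg h]

lemma Wop_i0 (s : ℕ) (k : ℤ) (p : MM r) :
    Wop r s 0 k p = if k = 0 then p else 0 := by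
  cases s <;> rfl

lemma Wop_out (s i : ℕ) (k : ℤ) (p : MM r) (hi0 : i ≠ 0) (hlt : s < i) :
    Wop r s i k p = 0 := by
  cases s with
  | zero =>
    show (if i = 0 then _ else (0 : MM r → MM r)) p = 0
    rw [if_neg hi0]
    rfl
  | succ s =>
    show (if i = 0 then _ else if s + 1 < i then (0 : MM r → MM r) else _) p = 0
    rw [if_neg hi0, if_pos hlt]
    rfl

lemma Wop_wle {p : MM r} {n : ℤ} (s i : ℕ) (k : ℤ) (hp : Wle p n) :
    Wle (Wop r s i k p) (n - k) := by
  induction s generalizing i k with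
  | zero =>
    by_cases hi : i = 0
    · subst hi
      rw [Wop_i0]
      split_ifs with hk
      · subst hk; exact hp.mono (by omega)
      · exact Wle_zero _
    · rw [Wop_out 0 i k p hi (by omega)]
      exact Wle_zero _
  | succ s ih =>
    by_cases hi : i = 0
    · subst hi
      rw [Wop_i0]
      split_ifs with hk
      · subst hk; exact hp.mono (by omega)
      · exact Wle_zero _
    · by_cases hle : i ≤ s + 1
      · rw [Wop_succ s i k p hi hle]
        refine Wle_add (ih i k) (Wle_finsum fun k₂ => ?_)
        exact (stepOp_wle _ _ _ (ih (i - 1) k₂)).mono (by omega)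
      · rw [Wop_out (s + 1) i k p hi (by omega)]
        exact Wle_zero _

lemma Wop_vars {p : MM r} {S : Set (ℕ × ℕ)} (s i : ℕ) (k : ℤ) (hs : s ≤ r) (hp : Vle p S) :
    Vle (Wop r s i k p) (S ∪ {w | r - s < w.1}) := by
  induction s generalizing i k with
  | zero =>
    by_cases hi : i = 0
    · subst hi
      rw [Wop_i0]
      split_ifs
      · exact hp.mono Set.subset_union_left
      · exact Vle_zero _
    · rw [Wop_out 0 i k p hi (by omega)]
      exact Vle_zero _
  | succ s ih =>
    by_cases hi : i = 0
    · subst hi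
      rw [Wop_i0]
      split_ifs
      · exact hp.mono Set.subset_union_left
      · exact Vle_zero _
    · by_cases hle : i ≤ s + 1
      · rw [Wop_succ s i k p hi hle]
        have hsub : S ∪ {w | r - s < w.1} ⊆ S ∪ {w : ℕ × ℕ | r - (s + 1) < w.1} := by
          rintro w (hw | hw)
          · exact Or.inl hw
          · exact Or.inr (by simp only [Set.mem_setOf_eq] at hw ⊢; omega)
        refine Vle_add ((ih i k (by omega)).mono hsub) (Vle_finsum fun k₂ => ?_)
        refine (stepOp_vars _ _ _ (ih (i - 1) k₂ (by omega))).mono ?_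
        rintro w ((hw | hw) | hw)
        · exact Or.inl hw
        · exact Or.inr (by simp only [Set.mem_setOf_eq] at hw ⊢; omega)
        · exact Or.inr (by simp only [Set.mem_setOf_eq] at hw ⊢; omega)
      · rw [Wop_out (s + 1) i k p hi (by omega)]
        exact Vle_zero _

lemma Vle_vars (p : MM r) : Vle p ↑p.vars := fun v hv => hv

lemma Wop_ksupport (s i : ℕ) (k : ℤ) (p : MM r) (hs : s ≤ r) :
    Function.support (fun k₂ : ℤ => stepOp r (r - s) (k - k₂) (((k₂ + (i : ℤ) - 1 : ℤ) : KK r))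
        (Wop r s (i - 1) k₂ p))
      ⊆ Set.Icc (k - (Bp p : ℤ)) ((wtP p : ℤ)) := by
  intro k₂ hk₂
  simp only [Function.mem_support] at hk₂
  by_contra hout
  apply hk₂
  simp only [Set.mem_Icc, not_and_or, not_le] at hout
  rcases hout with h | h
  · -- k - k₂ > Bp p : derivative kill
    have hm : (0 : ℤ) < k - k₂ := by
      have : (0 : ℤ) ≤ (Bp p : ℤ) := Int.ofNat_nonneg _
      omega
    refine stepOp_kill _ _ hm ?_
    intro hv
    rcases Wop_vars s (i - 1) k₂ hs (Vle_vars p) _ hv with hv' | hv'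
    · have := snd_le_Bp hv'
      simp only at this
      omega
    · simp only [Set.mem_setOf_eq] at hv'
      omega
  · -- k₂ > wtP p : the W-operator vanishes
    have : Wop r s (i - 1) k₂ p = 0 :=
      eq_zero_of_Wle_neg (Wop_wle s (i - 1) k₂ (Wle_wtP p)) (by omega)
    rw [this, stepOp_zero]

/-! ### IncLists lemmas -/

lemma IncLists_finite (j lo hi : ℕ) : (IncLists j lo hi).Finite := by
  apply Set.Finite.subset
    (((List.finite_length_eq (Fin (hi + 1)) j).image (List.map Fin.val)))
  rintro cs ⟨hlen, _, hmem⟩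
  have hlt : ∀ c ∈ cs, c < hi + 1 := fun c hc => by
    have := (hmem c hc).2; omega
  refine ⟨cs.pmap (fun c h => (⟨c, h⟩ : Fin (hi + 1))) hlt, ?_, ?_⟩
  · simp [List.length_pmap, hlen]
  · rw [List.map_pmap]
    exact List.pmap_eq_map _ ▸ (by simp)

lemma IncLists_zero (lo hi : ℕ) : IncLists 0 lo hi = {[]} := by
  ext cs
  constructor
  · rintro ⟨hlen, -, -⟩
    exact List.length_eq_zero_iff.mp hlen
  · rintro rfl
    exact ⟨rfl, List.isChain_nil, by simp⟩

lemma IncLists_le {cs : List ℕ} {j lo hi : ℕ} (h : cs ∈ IncLists j lo hi) :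
    j ≤ hi + 1 - lo := by
  obtain ⟨hlen, hch, hmem⟩ := h
  have pp : cs.Pairwise (· < ·) := List.isChain_iff_pairwise.mp hch
  have nd : cs.Nodup := pp.nodup
  have hsub : cs.toFinset ⊆ Finset.Icc lo hi := by
    intro c hc
    rw [List.mem_toFinset] at hc
    exact Finset.mem_Icc.mpr (hmem c hc)
  have := Finset.card_le_card hsub
  rw [List.toFinset_card_of_nodup nd, hlen, Nat.card_Icc] at this
  exact this

lemma IncLists_empty {j lo hi : ℕ} (h : hi + 1 - lo < j) : IncLists j lo hi = ∅ := by
  ext cs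
  simp only [Set.mem_empty_iff_false, iff_false]
  intro hcs
  exact absurd (IncLists_le hcs) (by omega)

lemma IncLists_decomp (j lo hi : ℕ) (hlohi : lo ≤ hi) :
    IncLists (j + 1) lo hi
      = IncLists (j + 1) (lo + 1) hi ∪ (List.cons lo '' IncLists j (lo + 1) hi) := by
  ext cs
  constructor
  · rintro ⟨hlen, hch, hmem⟩
    cases cs with
    | nil => simp at hlen
    | cons c cs' =>
      have pp : (c :: cs').Pairwise (· < ·) := List.isChain_iff_pairwise.mp hch
      rw [List.pairwise_cons] at pp
      by_cases hc : c = lo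
      · subst hc
        refine Or.inr ⟨cs', ⟨by simpa using hlen, hch.tail, fun x hx => ?_⟩, rfl⟩
        exact ⟨pp.1 x hx, (hmem x (List.mem_cons_of_mem _ hx)).2⟩
      · refine Or.inl ⟨hlen, hch, fun x hx => ?_⟩
        rcases List.mem_cons.mp hx with rfl | hx'
        · have := (hmem x (List.mem_cons_self)).1
          exact ⟨by omega, (hmem x hx).2⟩
        · have h1 := (hmem c (List.mem_cons_self)).1
          have h2 := pp.1 x hx'
          exact ⟨by omega, (hmem x hx).2⟩
  · rintro (⟨hlen, hch, hmem⟩ | ⟨cs', ⟨hlen, hch, hmem⟩, rfl⟩)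
    · refine ⟨hlen, hch, fun x hx => ?_⟩
      have := hmem x hx
      exact ⟨by omega, this.2⟩
    · refine ⟨by simp [hlen], ?_, ?_⟩
      · refine List.isChain_iff_pairwise.mpr (List.pairwise_cons.mpr ⟨fun x hx => ?_, ?_⟩)
        · have := (hmem x hx).1; omega
        · exact List.isChain_iff_pairwise.mp hch
      · intro x hx
        rcases List.mem_cons.mp hx with rfl | hx'
        · exact ⟨le_refl _, hlohi⟩
        · have := hmem x hx'
          exact ⟨by omega, this.2⟩

lemma IncLists_disj (j lo hi : ℕ) :
    Disjoint (IncLists (j + 1) (lo + 1) hi) (List.cons lo '' IncLists j (lo + 1) hi) := by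
  rw [Set.disjoint_left]
  rintro cs ⟨-, -, hmem⟩ ⟨cs', -, rfl⟩
  have := (hmem lo (List.mem_cons_self)).1
  omega

/-! ### PathSet lemmas -/

lemma mem_PathSet {L : List ℤ} {y : ℤ} {N : ℕ} {y' : ℤ} :
    L ∈ PathSet y N y' ↔ L.length = N ∧ y + L.sum = y' := Iff.rfl

lemma PathSet_zero (k : ℤ) : PathSet k 0 0 = if k = 0 then {([] : List ℤ)} else ∅ := by
  ext L
  rw [mem_PathSet]
  split_ifs with hk
  · subst hk
    constructor
    · rintro ⟨hlen, -⟩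
      exact List.length_eq_zero_iff.mp hlen
    · rintro rfl
      simp
  · constructor
    · rintro ⟨hlen, hsum⟩
      rcases List.length_eq_zero_iff.mp hlen
      simp at hsum
      exact hk hsum
    · rintro ⟨⟩

/-! ### The key reindexing lemma -/

lemma key_reindex {j : ℕ} {k : ℤ} (F : List ℤ → MM r)
    (hfib : ∀ k₂ : ℤ, (PathSet k₂ j 0 ∩ Function.support fun L' => F ((k₂ - k) :: L')).Finite)
    (hK : ({k₂ : ℤ | ∃ L' ∈ PathSet k₂ j 0, F ((k₂ - k) :: L') ≠ 0}).Finite) :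
    (PathSet k (j + 1) 0 ∩ Function.support F).Finite ∧
      ∑ᶠ (k₂ : ℤ), ∑ᶠ L' ∈ PathSet k₂ j 0, F ((k₂ - k) :: L')
        = ∑ᶠ L ∈ PathSet k (j + 1) 0, F L := by
  classical
  -- finiteness
  have hcover : PathSet k (j + 1) 0 ∩ Function.support F ⊆
      ⋃ k₂ ∈ {k₂ : ℤ | ∃ L' ∈ PathSet k₂ j 0, F ((k₂ - k) :: L') ≠ 0},
        (List.cons (k₂ - k)) '' (PathSet k₂ j 0 ∩ Function.support fun L' => F ((k₂ - k) :: L')) := by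
    rintro L ⟨⟨hlen, hsum⟩, hF⟩
    cases L with
    | nil => simp at hlen
    | cons d L' =>
      have hL' : L' ∈ PathSet (k + d) j 0 := by
        refine ⟨by simpa using hlen, ?_⟩
        rw [List.sum_cons] at hsum
        omega
      have hd : (k + d) - k = d := by omega
      refine Set.mem_biUnion (show k + d ∈ _ from ⟨L', hL', by rw [hd]; exact hF⟩) ?_
      exact ⟨L', ⟨hL', by rw [hd]; exact hF⟩, by rw [hd]⟩
  have hfin : (PathSet k (j + 1) 0 ∩ Function.support F).Finite :=
    Set.Finite.subset (Set.Finite.biUnion hK fun k₂ _ => (hfib k₂).image _) hcover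
  refine ⟨hfin, ?_⟩
  -- convert to finite sums
  have hg : Function.support (fun k₂ : ℤ => ∑ᶠ L' ∈ PathSet k₂ j 0, F ((k₂ - k) :: L'))
      ⊆ ↑hK.toFinset := by
    intro k₂ hk₂
    rw [Set.Finite.coe_toFinset]
    by_contra hout
    apply hk₂
    simp only [Set.mem_setOf_eq, not_exists, not_and, ne_eq, not_not] at hout
    exact finsum_mem_eq_zero_of_forall_eq_zero fun L' hL' => hout L' hL'
  rw [finsum_eq_sum_of_support_subset _ hg]
  rw [finsum_mem_eq_sum F hfin]
  have hterm : ∀ k₂ ∈ hK.toFinset,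
      (∑ᶠ L' ∈ PathSet k₂ j 0, F ((k₂ - k) :: L'))
        = ∑ L' ∈ (hfib k₂).toFinset, F ((k₂ - k) :: L') :=
    fun k₂ _ => finsum_mem_eq_sum _ (hfib k₂)
  rw [Finset.sum_congr rfl hterm]
  rw [Finset.sum_sigma']
  refine Finset.sum_nbij' (fun x => (x.1 - k) :: x.2) (fun L => ⟨k + L.headI, L.tail⟩)
    ?_ ?_ ?_ ?_ ?_
  · rintro ⟨k₂, L'⟩ hx
    rw [Finset.mem_sigma] at hx
    obtain ⟨h1, h2⟩ := hx
    rw [Set.Finite.mem_toFinset] at h2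
    obtain ⟨⟨hlen, hsum⟩, hF⟩ := h2
    rw [Set.Finite.mem_toFinset]
    exact ⟨⟨by simpa using hlen, by rw [List.sum_cons]; omega⟩, hF⟩
  · intro L hL
    rw [Set.Finite.mem_toFinset] at hL
    obtain ⟨⟨hlen, hsum⟩, hF⟩ := hL
    cases L with
    | nil => simp at hlen
    | cons d L' =>
      rw [Finset.mem_sigma]
      have hd : (k + (d :: L').headI) - k = d := by simp
      constructor
      · rw [Set.Finite.mem_toFinset]
        refine ⟨(d :: L').tail, ⟨by simpa using hlen, ?_⟩, ?_⟩
        · simp only [List.tail_cons]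
          rw [List.sum_cons] at hsum
          omega
        · simpa [hd] using hF
      · rw [Set.Finite.mem_toFinset]
        refine ⟨⟨by simpa using hlen, ?_⟩, ?_⟩
        · simp only [List.tail_cons]
          rw [List.sum_cons] at hsum
          omega
        · simpa [hd] using hF
  · rintro ⟨k₂, L'⟩ hx
    simp only [List.headI_cons, List.tail_cons]
    congr 1
    omega
  · intro L hL
    rw [Set.Finite.mem_toFinset] at hL
    obtain ⟨⟨hlen, -⟩, -⟩ := hL
    cases L with
    | nil => simp at hlen
    | cons d L' => simp
  · rintro ⟨k₂, L'⟩ hx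
    rfl

/-! ### The inner (colour) sum -/

def inn (r : ℕ) (i lo : ℕ) (k : ℤ) (L : List ℤ) (p : MM r) : MM r :=
  ∑ᶠ cs ∈ IncLists i lo r, wtCol r i 0 1 k (cs.zip L) p

lemma inn_i0 (lo : ℕ) (k : ℤ) (L : List ℤ) (p : MM r) : inn r 0 lo k L p = p := by
  rw [inn, IncLists_zero, finsum_mem_singleton, show List.zip ([] : List ℕ) L = [] from rfl,
    wtCol_nil]

lemma inn_wle {i lo : ℕ} {k : ℤ} {L : List ℤ} {p : MM r} {n : ℤ}
    (hlen : L.length = i) (hsum : k + L.sum = 0) (hp : Wle p n) :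
    Wle (inn r i lo k L p) (n - k) := by
  refine Wle_finsum_mem fun cs hcs => ?_
  have hclen : cs.length = i := hcs.1
  have hz : ((cs.zip L).map Prod.snd) = L := List.map_snd_zip (by omega)
  refine (wtCol_wle _ _ _ _ _ hp).mono (le_of_eq ?_)
  rw [hz]
  omega

lemma inn_vars {i lo : ℕ} {k : ℤ} {L : List ℤ} {p : MM r} :
    Vle (inn r i lo k L p) (↑p.vars ∪ {w | lo ≤ w.1}) := by
  refine Vle_finsum_mem fun cs hcs => ?_
  refine wtCol_vars _ _ _ _ _ (fun x hx => ?_) (Vle_vars p)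
  obtain ⟨c, d⟩ := x
  exact (hcs.2.2 c (List.of_mem_zip hx).1).1

lemma stepOp_finsum_mem {α : Type*} (a : ℕ) (m : ℤ) (t : KK r) {s : Set α} {f : α → MM r}
    (h : (s ∩ Function.support f).Finite) :
    stepOp r a m t (∑ᶠ x ∈ s, f x) = ∑ᶠ x ∈ s, stepOp r a m t (f x) :=
  (stepHom r a m t).map_finsum_mem' h

/-! ### Trivial cases of the master lemma -/

lemma master_i0 (lo : ℕ) (k : ℤ) (p : MM r) :
    (PathSet k 0 0 ∩ Function.support fun L => inn r 0 lo k L p).Finite ∧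
      (if k = 0 then p else 0) = ∑ᶠ L ∈ PathSet k 0 0, inn r 0 lo k L p := by
  constructor
  · apply Set.Finite.inter_of_left
    rw [PathSet_zero]
    split_ifs
    · exact Set.finite_singleton _
    · exact Set.finite_empty
  · rw [PathSet_zero]
    split_ifs with hk
    · rw [finsum_mem_singleton, inn_i0]
    · rw [finsum_mem_empty]

lemma master_empty (i lo : ℕ) (k : ℤ) (p : MM r) (he : IncLists i lo r = ∅) :
    (PathSet k i 0 ∩ Function.support fun L => inn r i lo k L p).Finite ∧
      (0 : MM r) = ∑ᶠ L ∈ PathSet k i 0, inn r i lo k L p := by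
  have hz : ∀ L, inn r i lo k L p = 0 := fun L => by rw [inn, he, finsum_mem_empty]
  constructor
  · refine Set.Finite.subset Set.finite_empty fun L hL => ?_
    exact absurd (hz L) hL.2
  · symm
    exact finsum_mem_eq_zero_of_forall_eq_zero fun L _ => hz L

/-! ### The head-step identity -/

lemma H_cons_eq (a j : ℕ) (k k₂ : ℤ) (cs : List ℕ) (L' : List ℤ) (p : MM r) :
    wtCol r (j + 1) 0 1 k ((a :: cs).zip ((k₂ - k) :: L')) p
      = stepOp r a (k - k₂) (((k₂ + ((j : ℤ) + 1) - 1 : ℤ) : KK r))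
          (wtCol r j 0 1 k₂ (cs.zip L') p) := by
  rw [List.zip_cons_cons, wtCol_cons]
  rw [show k + (k₂ - k) = k₂ from by ring]
  rw [← wtCol_shift]
  rw [show -(k₂ - k) = k - k₂ from by ring]
  refine stepOp_t_congr _ _ fun hm => ?_
  have hk : k₂ = k := by omega
  subst hk
  congr 1
  push_cast
  ring

/-! ### The master lemma -/

lemma master (s : ℕ) (hs : s ≤ r) : ∀ (i : ℕ) (k : ℤ) (p : MM r),
    (PathSet k i 0 ∩ Function.support fun L => inn r i (r - s + 1) k L p).Finite ∧
      Wop r s i k p = ∑ᶠ L ∈ PathSet k i 0, inn r i (r - s + 1) k L p := by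
  induction s with
  | zero =>
    intro i k p
    cases i with
    | zero =>
      refine ⟨(master_i0 _ k p).1, ?_⟩
      rw [Wop_i0]
      exact (master_i0 _ k p).2
    | succ j =>
      have he : IncLists (j + 1) (r - 0 + 1) r = ∅ := IncLists_empty (by omega)
      refine ⟨(master_empty _ _ k p he).1, ?_⟩
      rw [Wop_out 0 (j + 1) k p (by omega) (by omega)]
      exact (master_empty _ _ k p he).2
  | succ s ih =>
    have hs' : s ≤ r := by omega
    intro i k p
    cases i with
    | zero =>
      refine ⟨(master_i0 _ k p).1, ?_⟩
      rw [Wop_i0]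
      exact (master_i0 _ k p).2
    | succ j =>
      rw [show r - (s + 1) + 1 = r - s from by omega]
      by_cases hle : j + 1 ≤ s + 1
      · -- main case
        -- the head-extended colour sum
        set H : List ℤ → MM r := fun L =>
          ∑ᶠ cs ∈ IncLists j (r - s + 1) r, wtCol r (j + 1) 0 1 k (((r - s) :: cs).zip L) p
          with hH
        -- pointwise identity for the k₂-summand
        have hpoint : ∀ (k₂ : ℤ) (L' : List ℤ),
            H ((k₂ - k) :: L')
              = stepOp r (r - s) (k - k₂) (((k₂ + ((j : ℤ) + 1) - 1 : ℤ) : KK r))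
                  (inn r j (r - s + 1) k₂ L' p) := by
          intro k₂ L'
          rw [hH, inn, stepOp_finsum_mem _ _ _ ((IncLists_finite _ _ _).inter_of_left _)]
          exact finsum_mem_congr rfl fun cs _ => H_cons_eq _ _ _ _ _ _ _
        -- the summand of the Miura recursion, rewritten
        have hsummand : ∀ k₂ : ℤ,
            stepOp r (r - s) (k - k₂) (((k₂ + ((j + 1 : ℕ) : ℤ) - 1 : ℤ) : KK r))
                (Wop r s ((j + 1) - 1) k₂ p)
              = ∑ᶠ L' ∈ PathSet k₂ j 0, H ((k₂ - k) :: L') := by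
          intro k₂
          have hcast : ((k₂ + ((j + 1 : ℕ) : ℤ) - 1 : ℤ) : KK r)
              = ((k₂ + ((j : ℤ) + 1) - 1 : ℤ) : KK r) := by push_cast; ring
          rw [show (j + 1) - 1 = j from rfl, hcast, (ih hs' j k₂ p).2,
            stepOp_finsum_mem _ _ _ (ih hs' j k₂ p).1]
          exact finsum_mem_congr rfl fun L' _ => (hpoint k₂ L').symm
        -- hypotheses of the reindexing lemma
        have hfib : ∀ k₂ : ℤ,
            (PathSet k₂ j 0 ∩ Function.support fun L' => H ((k₂ - k) :: L')).Finite := by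
          intro k₂
          refine Set.Finite.subset (ih hs' j k₂ p).1 fun L' hL' => ⟨hL'.1, fun h0 => hL'.2 ?_⟩
          show H ((k₂ - k) :: L') = 0
          rw [hpoint k₂ L', show inn r j (r - s + 1) k₂ L' p = 0 from h0, stepOp_zero]
        have hK : ({k₂ : ℤ | ∃ L' ∈ PathSet k₂ j 0, H ((k₂ - k) :: L') ≠ 0}).Finite := by
          refine Set.Finite.subset (Set.finite_Icc (k - (Bp p : ℤ)) ((wtP p : ℤ)))
            fun k₂ hk₂ => ?_
          obtain ⟨L', hL', hne⟩ := hk₂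
          rw [hpoint k₂ L'] at hne
          rw [Set.mem_Icc]
          constructor
          · -- k - k₂ ≤ Bp p
            by_contra hout
            apply hne
            have hm : (0 : ℤ) < k - k₂ := by
              have : (0 : ℤ) ≤ (Bp p : ℤ) := Int.ofNat_nonneg _
              omega
            refine stepOp_kill _ _ hm fun hv => ?_
            rcases inn_vars _ hv with hv' | hv'
            · have := snd_le_Bp hv'
              simp only at this
              omega
            · simp only [Set.mem_setOf_eq] at hv'
              omega
          · -- k₂ ≤ wtP p
            by_contra hout
            apply hne
            have : inn r j (r - s + 1) k₂ L' p = 0 :=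
              eq_zero_of_Wle_neg (inn_wle hL'.1 hL'.2 (Wle_wtP p)) (by omega)
            rw [this, stepOp_zero]
        obtain ⟨finH, sumH⟩ := key_reindex H hfib hK
        -- decomposition of the colour sums
        have hinn : ∀ L : List ℤ,
            inn r (j + 1) (r - s) k L p = inn r (j + 1) (r - s + 1) k L p + H L := by
          intro L
          rw [inn, IncLists_decomp j (r - s) r (by omega),
            finsum_mem_union (IncLists_disj j (r - s) r) (IncLists_finite _ _ _)
              ((IncLists_finite _ _ _).image _)]
          congr 1
          rw [finsum_mem_image fun x _ y _ h => by injection h]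
        obtain ⟨finA, eqA⟩ := ih hs' (j + 1) k p
        constructor
        · refine Set.Finite.subset (finA.union finH) fun L hL => ?_
          by_cases h1 : inn r (j + 1) (r - s + 1) k L p = 0
          · refine Or.inr ⟨hL.1, fun h2 => hL.2 ?_⟩
            show inn r (j + 1) (r - s) k L p = 0
            rw [hinn, h1, show H L = 0 from h2, add_zero]
          · exact Or.inl ⟨hL.1, h1⟩
        · rw [Wop_succ s (j + 1) k p (by omega) hle, eqA, finsum_congr hsummand, sumH,
            ← finsum_mem_add_distrib' finA finH]
          exact finsum_mem_congr rfl fun L _ => (hinn L).symm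
      · -- i > s + 1 : both sides vanish
        have he : IncLists (j + 1) (r - s) r = ∅ := IncLists_empty (by omega)
        refine ⟨(master_empty _ _ k p he).1, ?_⟩
        rw [Wop_out (s + 1) (j + 1) k p (by omega) (by omega)]
        exact (master_empty _ _ k p he).2
end Stmt4Aux

/-- **Lemma 3.4 of the paper** (the combinatorial formula for the generators of the
`W`-algebra `W^k(gl_r)`). For `r ≥ 2`, `1 ≤ i ≤ r` and `k ∈ ℤ`, one has the identity of
`K`-linear operators on `M`:
`W^i_k = Σ_{γ ∈ Γ_{(0,k)→(i,0)}} Σ_{f : [i] → [r] strictly increasing} wt(γ, f)`,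
and the sum over paths is locally finite. -/
theorem stmt4 (r : ℕ) (hr : 2 ≤ r) (i : ℕ) (hi1 : 1 ≤ i) (hi2 : i ≤ r) (k : ℤ) :
    (∀ p : MM r,
        {L ∈ PathSet k i 0 |
          (∑ᶠ cs ∈ IncLists i 1 r, wtCol r i 0 1 k (cs.zip L) p) ≠ 0}.Finite) ∧
    (∀ p : MM r,
        Wop r r i k p
          = ∑ᶠ L ∈ PathSet k i 0, ∑ᶠ cs ∈ IncLists i 1 r, wtCol r i 0 1 k (cs.zip L) p) := by
  constructor
  · intro p
    have h := (Stmt4Aux.master (r := r) r le_rfl i k p).1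
    rw [show r - r + 1 = 1 from by omega] at h
    exact h
  · intro p
    have h := (Stmt4Aux.master (r := r) r le_rfl i k p).2
    rw [show r - r + 1 = 1 from by omega] at h
    exact h

end Stmt4
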